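/- In a maximal [r,s,t]-coloring of a graph G, if a singleton-class vertex w_k has exactly one neighbor u_j in a size-2 class U_j = {u_j, v_j}, then every singleton-class vertex w_{k'} is adjacent to u_j. -/

import Mathlib

open Finset

variable {V : Type*}

/-- `P` is the set of color classes of an `[r,s,t]`-coloring of `G`:
a partition of the vertices into independent sets, with `r` classes of size 3,
`s` classes of size 2 and `t` singleton classes. -/
def IsRST [Fintype V] [DecidableEq V] (G : SimpleGraph V) (P : Finset (Finset V))
    (r s t : ℕ) : Prop :=
  (∀ v : V, ∃! A, A ∈ P ∧ v ∈ A) ∧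
  (∀ A ∈ P, ∀ u ∈ A, ∀ w ∈ A, ¬ G.Adj u w) ∧
  (P.filter (fun A => A.card = 3)).card = r ∧
  (P.filter (fun A => A.card = 2)).card = s ∧
  (P.filter (fun A => A.card = 1)).card = t ∧
  (∀ A ∈ P, A.card = 1 ∨ A.card = 2 ∨ A.card = 3)

/-- A maximal `[r,s,t]`-coloring: for any other `[r',s',t']`-coloring,
either `r > r'`, or `r = r'` and `s ≥ s'`. -/
def IsMaxRST [Fintype V] [DecidableEq V] (G : SimpleGraph V) (P : Finset (Finset V))
    (r s t : ℕ) : Prop :=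
  IsRST G P r s t ∧
  ∀ (P' : Finset (Finset V)) (r' s' t' : ℕ), IsRST G P' r' s' t' →
    r' < r ∨ (r' = r ∧ s' ≤ s)

/-- `eB G X Y` is the number of edges with one endpoint in `X` and the other in `Y`. -/
def eB [Fintype V] [DecidableEq V] (G : SimpleGraph V) [DecidableRel G.Adj]
    (X Y : Finset V) : ℕ :=
  ((X ×ˢ Y).filter fun p => G.Adj p.1 p.2).card

/-- `G` is equitably `k`-colorable: a proper `k`-coloring whose color classes
have sizes differing pairwise by at most 1. -/
def EqColorable [Fintype V] (G : SimpleGraph V) (k : ℕ) : Prop :=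
  ∃ C : V → Fin k, (∀ u v, G.Adj u v → C u ≠ C v) ∧
    ∀ i j : Fin k,
      (Finset.univ.filter fun v => C v = i).card ≤
        (Finset.univ.filter fun v => C v = j).card + 1

theorem stmt6 [Fintype V] [DecidableEq V] (G : SimpleGraph V) [DecidableRel G.Adj]
    (P : Finset (Finset V)) (r s t : ℕ)
    (h : IsMaxRST G P r s t)
    (A U : Finset V) (w u : V)
    (hA : A ∈ P) (hAw : A = {w})
    (hU : U ∈ P) (hU2 : U.card = 2) (hu : u ∈ U)
    (hadj : G.Adj w u) (hone : eB G {w} U = 1) :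
    ∀ B ∈ P, B.card = 1 → ∀ w' ∈ B, G.Adj w' u := by
  
  intro B hB hB1 w' hw'
  by_contra hn
  obtain ⟨⟨hPart, hInd, hr, hs, ht, hsz⟩, hmax⟩ := h
  have hdisj : ∀ {C D : Finset V} {x : V}, C ∈ P → D ∈ P → x ∈ C → x ∈ D → C = D := by
    intro C D x hC hD hxC hxD
    obtain ⟨E, _, hEu⟩ := hPart x
    rw [hEu C ⟨hC, hxC⟩, hEu D ⟨hD, hxD⟩]
  have hwA : w ∈ A := by rw [hAw]; exact mem_singleton_self w
  -- B = {w'}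
  have hBeq : B = {w'} := by
    obtain ⟨a, ha⟩ := card_eq_one.mp hB1
    rw [ha] at hw' ⊢
    rw [mem_singleton.mp hw']
  have hw'w : w' ≠ w := by
    rintro rfl; exact hn hadj
  -- get v, the other element of U
  obtain ⟨a, b, hab, hUab⟩ := card_eq_two.mp hU2
  have hv : ∃ v : V, U = {u, v} ∧ u ≠ v := by
    rw [hUab] at hu
    rcases mem_insert.mp hu with h1 | h1
    · exact ⟨b, by rw [hUab, h1], h1 ▸ hab⟩
    · have h1 := mem_singleton.mp h1
      refine ⟨a, ?_, h1 ▸ hab.symm⟩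
      rw [hUab, h1]
      exact Finset.pair_comm a b
  obtain ⟨v, hUv, huv⟩ := hv
  have hvU : v ∈ U := by rw [hUv]; simp
  -- basic distinctness
  have hAU : A ≠ U := by rw [hAw]; intro hEq; rw [← hEq] at hU2; simp at hU2
  have hBU : B ≠ U := by rw [hBeq]; intro hEq; rw [← hEq] at hU2; simp at hU2
  have hAB : A ≠ B := by
    rw [hAw, hBeq]; intro hEq
    exact hw'w (mem_singleton.mp (hEq ▸ mem_singleton_self w)).symm
  have hwU : w ∉ U := fun hc => hAU (hdisj hA hU hwA hc)
  have hw'U : w' ∉ U := fun hc => hBU (hdisj hB hU hw' hc)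
  have hw'A : w' ∉ A := fun hc => hAB (hdisj hA hB hc hw')
  have hvw : v ≠ w := fun hc => hwU (hc ▸ hvU)
  have huw : u ≠ w := fun hc => hwU (hc ▸ hu)
  have hvw' : v ≠ w' := fun hc => hw'U (hc ▸ hvU)
  have huw' : u ≠ w' := fun hc => hw'U (hc ▸ hu)
  -- w is not adjacent to v
  have hwv : ¬ G.Adj w v := by
    intro hc
    have h1 : (w, u) ∈ (({w} : Finset V) ×ˢ U).filter fun p => G.Adj p.1 p.2 := by
      simp [hu, hadj]
    have h2 : (w, v) ∈ (({w} : Finset V) ×ˢ U).filter fun p => G.Adj p.1 p.2 := by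
      simp [hvU, hc]
    obtain ⟨x, hx⟩ := card_eq_one.mp
      (show (((({w} : Finset V)) ×ˢ U).filter fun p => G.Adj p.1 p.2).card = 1 from hone)
    rw [hx, mem_singleton] at h1 h2
    exact huv (by rw [← h2] at h1; exact (Prod.mk.injEq _ _ _ _ ▸ h1).2)
  -- the new partition
  set X1 : Finset V := {v, w} with hX1
  set X2 : Finset V := {u, w'} with hX2
  set Q : Finset (Finset V) := ((P.erase A).erase U).erase B with hQ
  set P' : Finset (Finset V) := insert X1 (insert X2 Q) with hP'
  have hX1card : X1.card = 2 := card_pair hvw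
  have hX2card : X2.card = 2 := card_pair huw'
  have hX1X2 : X1 ≠ X2 := by
    intro hEq
    have : w ∈ X2 := hEq ▸ (by simp [hX1])
    rcases mem_insert.mp this with h1 | h1
    · exact huw (mem_singleton.mp (by simpa using h1)).symm
    · exact hw'w (mem_singleton.mp h1).symm
  have hX1P : X1 ∉ P := by
    intro hc
    have : X1 = U := hdisj hc hU (by simp [hX1]) hvU
    exact hwU (this ▸ (by simp [hX1] : w ∈ X1))
  have hX2P : X2 ∉ P := by
    intro hc
    have : X2 = U := hdisj hc hU (by simp [hX2]) hu
    exact hw'U (this ▸ (by simp [hX2] : w' ∈ X2))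
  have hQsub : Q ⊆ P := (erase_subset _ _).trans ((erase_subset _ _).trans (erase_subset _ _))
  have hmemP' : ∀ C : Finset V, C ∈ P' ↔ C = X1 ∨ C = X2 ∨ (C ∈ P ∧ C ≠ A ∧ C ≠ U ∧ C ≠ B) := by
    intro C
    simp only [hP', hQ, mem_insert, mem_erase]
    tauto
  have hX1mem : X1 ∈ P' := by rw [hmemP']; left; rfl
  have hX2mem : X2 ∈ P' := by rw [hmemP']; right; left; rfl
  -- partition property
  have hPart' : ∀ x : V, ∃! C, C ∈ P' ∧ x ∈ C := by
    intro x
    have key : ∀ D, D ∈ P' → x ∈ D →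
        (x ∈ X1 → D = X1) ∧ (x ∉ X1 → x ∈ X2 → D = X2) := by
      intro D hD hxD
      rw [hmemP'] at hD
      constructor
      · intro hx1
        rcases hD with rfl | rfl | ⟨hDP, hDA, hDU, hDB⟩
        · rfl
        · exfalso
          simp only [hX1, mem_insert, mem_singleton] at hx1
          simp only [hX2, mem_insert, mem_singleton] at hxD
          rcases hx1 with h1 | h1 <;> rcases hxD with h2 | h2
          · exact huv (h1.symm.trans h2).symm
          · exact hvw' (h1.symm.trans h2)
          · exact huw (h1.symm.trans h2).symm
          · exact hw'w (h1.symm.trans h2).symm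
        · exfalso
          simp only [hX1, mem_insert, mem_singleton] at hx1
          rcases hx1 with h1 | h1
          · exact hDU (hdisj hDP hU hxD (by rw [h1]; exact hvU))
          · exact hDA (hdisj hDP hA hxD (by rw [h1]; exact hwA))
      · intro hx1 hx2
        rcases hD with rfl | rfl | ⟨hDP, hDA, hDU, hDB⟩
        · exact absurd hxD hx1
        · rfl
        · exfalso
          simp only [hX2, mem_insert, mem_singleton] at hx2
          rcases hx2 with h1 | h1
          · exact hDU (hdisj hDP hU hxD (by rw [h1]; exact hu))
          · exact hDB (hdisj hDP hB hxD (by rw [h1, hBeq]; exact mem_singleton_self w'))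
    by_cases hx1 : x ∈ X1
    · refine ⟨X1, ⟨hX1mem, hx1⟩, ?_⟩
      rintro D ⟨hD, hxD⟩
      exact (key D hD hxD).1 hx1
    · by_cases hx2 : x ∈ X2
      · refine ⟨X2, ⟨hX2mem, hx2⟩, ?_⟩
        rintro D ⟨hD, hxD⟩
        exact (key D hD hxD).2 hx1 hx2
      · obtain ⟨C, ⟨hCP, hxC⟩, hCu⟩ := hPart x
        have hxw : x ≠ w := fun hc => hx1 (by rw [hc]; simp [hX1])
        have hxv : x ≠ v := fun hc => hx1 (by rw [hc]; simp [hX1])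
        have hxu : x ≠ u := fun hc => hx2 (by rw [hc]; simp [hX2])
        have hxw' : x ≠ w' := fun hc => hx2 (by rw [hc]; simp [hX2])
        have hCA : C ≠ A := by
          rintro rfl; exact hxw (by rw [hAw] at hxC; exact mem_singleton.mp hxC)
        have hCU : C ≠ U := by
          rintro rfl
          rw [hUv] at hxC
          rcases mem_insert.mp hxC with h1 | h1
          · exact hxu h1
          · exact hxv (mem_singleton.mp h1)
        have hCB : C ≠ B := by
          rintro rfl; exact hxw' (by rw [hBeq] at hxC; exact mem_singleton.mp hxC)
        refine ⟨C, ⟨(hmemP' C).mpr (Or.inr (Or.inr ⟨hCP, hCA, hCU, hCB⟩)), hxC⟩, ?_⟩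
        rintro D ⟨hD, hxD⟩
        rw [hmemP'] at hD
        rcases hD with rfl | rfl | ⟨hDP, _, _, _⟩
        · exact absurd hxD hx1
        · exact absurd hxD hx2
        · exact hCu D ⟨hDP, hxD⟩
  -- independence
  have hInd' : ∀ C ∈ P', ∀ a ∈ C, ∀ b ∈ C, ¬ G.Adj a b := by
    intro C hC a ha b hb
    rw [hmemP'] at hC
    rcases hC with rfl | rfl | ⟨hCP, _, _, _⟩
    · simp only [hX1, mem_insert, mem_singleton] at ha hb
      rcases ha with rfl | rfl <;> rcases hb with rfl | rfl
      · exact G.loopless.irrefl _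
      · exact fun hc => hwv hc.symm
      · exact hwv
      · exact G.loopless.irrefl _
    · simp only [hX2, mem_insert, mem_singleton] at ha hb
      rcases ha with rfl | rfl <;> rcases hb with rfl | rfl
      · exact G.loopless.irrefl _
      · exact fun hc => hn hc.symm
      · exact hn
      · exact G.loopless.irrefl _
    · exact hInd C hCP a ha b hb
  -- size condition
  have hsz' : ∀ C ∈ P', C.card = 1 ∨ C.card = 2 ∨ C.card = 3 := by
    intro C hC
    rw [hmemP'] at hC
    rcases hC with rfl | rfl | ⟨hCP, _, _, _⟩
    · right; left; exact hX1card
    · right; left; exact hX2card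
    · exact hsz C hCP
  -- counting r
  have hfilter3 : P'.filter (fun C => C.card = 3) = P.filter (fun C => C.card = 3) := by
    ext C
    simp only [mem_filter]
    constructor
    · rintro ⟨hC, hc3⟩
      rw [hmemP'] at hC
      rcases hC with rfl | rfl | ⟨hCP, _, _, _⟩
      · rw [hX1card] at hc3; omega
      · rw [hX2card] at hc3; omega
      · exact ⟨hCP, hc3⟩
    · rintro ⟨hCP, hc3⟩
      refine ⟨(hmemP' C).mpr (Or.inr (Or.inr ⟨hCP, ?_, ?_, ?_⟩)), hc3⟩
      · rintro rfl; rw [hAw] at hc3; simp at hc3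
      · rintro rfl; rw [hU2] at hc3; omega
      · rintro rfl; rw [hB1] at hc3; omega
  -- counting s
  have hfilter2 : P'.filter (fun C => C.card = 2) =
      insert X1 (insert X2 ((P.filter (fun C => C.card = 2)).erase U)) := by
    ext C
    simp only [mem_filter, mem_insert, mem_erase]
    constructor
    · rintro ⟨hC, hc2⟩
      rw [hmemP'] at hC
      rcases hC with rfl | rfl | ⟨hCP, _, hCU, _⟩
      · left; rfl
      · right; left; rfl
      · right; right; exact ⟨hCU, hCP, hc2⟩
    · rintro (rfl | rfl | ⟨hCU, hCP, hc2⟩)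
      · exact ⟨hX1mem, hX1card⟩
      · exact ⟨hX2mem, hX2card⟩
      · refine ⟨(hmemP' C).mpr (Or.inr (Or.inr ⟨hCP, ?_, hCU, ?_⟩)), hc2⟩
        · rintro rfl; rw [hAw] at hc2; simp at hc2
        · rintro rfl; rw [hB1] at hc2; omega
  have hUfilt : U ∈ P.filter (fun C => C.card = 2) := mem_filter.mpr ⟨hU, hU2⟩
  have hs1 : 1 ≤ s := by rw [← hs]; exact card_pos.mpr ⟨U, hUfilt⟩
  have hscount : (P'.filter (fun C => C.card = 2)).card = s + 1 := by
    rw [hfilter2]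
    have hX2nm : X2 ∉ (P.filter (fun C => C.card = 2)).erase U :=
      fun hc => hX2P (mem_filter.mp (mem_of_mem_erase hc)).1
    have hX1nm : X1 ∉ insert X2 ((P.filter (fun C => C.card = 2)).erase U) := by
      intro hc
      rcases mem_insert.mp hc with h1 | h1
      · exact hX1X2 h1
      · exact hX1P (mem_filter.mp (mem_of_mem_erase h1)).1
    rw [card_insert_of_notMem hX1nm, card_insert_of_notMem hX2nm,
      card_erase_of_mem hUfilt, hs]
    omega
  have hRST' : IsRST G P' r (s + 1) ((P'.filter (fun C => C.card = 1)).card) :=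
    ⟨hPart', hInd', by rw [hfilter3, hr], hscount, rfl, hsz'⟩
  rcases hmax P' r (s + 1) _ hRST' with hc | ⟨_, hc⟩
  · omega
  · omega
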